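/- Let f : ℝⁿ → ℝ ∪ {∞}, let g : ℝⁿ → ℝᵐ be a mapping, and let C be a nonempty subset of ℝᵐ; assume f_* := inf{ f(x) : g(x) ∈ C } is finite. Define the optimal value function V : ℝᵐ → ℝ ∪ {±∞} by V(u) := inf{ f(x) : g(x) ∈ C + u } (with V(u) := ∞ when no x satisfies g(x) ∈ C + u). If there exists a constant c_* > 0 such that inf{ f(x) : g(x) ∈ C } = inf_{x ∈ ℝⁿ} ( f(x) + c_*·dist(g(x), C) ), then V(0) ≤ V(u) + c_*·‖u‖ for all u ∈ ℝᵐ; in particular, liminf_{u → 0, u ≠ 0} ( V(u) − V(0) ) / ‖u‖ ≥ −c_* > −∞. -/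

import Mathlib

open scoped Pointwise

/-- Corollary to Theorem 3.2, forward direction: if the distance penalty is
exact with constant `c_*`, then the optimal value function `V` satisfies
`V(0) ≤ V(u) + c_* ‖u‖` for all `u`; in particular
`liminf_{u → 0, u ≠ 0} (V(u) - V(0)) / ‖u‖ ≥ -c_* > -∞`. -/
theorem stmt_6 {n m : ℕ}
    (f : EuclideanSpace ℝ (Fin n) → EReal) (hf : ∀ x, f x ≠ ⊥)
    (g : EuclideanSpace ℝ (Fin n) → EuclideanSpace ℝ (Fin m))
    (C : Set (EuclideanSpace ℝ (Fin m))) (hC : C.Nonempty)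
    (fstar : ℝ) (hfstar : (fstar : EReal) = ⨅ x ∈ {x | g x ∈ C}, f x)
    (V : EuclideanSpace ℝ (Fin m) → EReal)
    (hV : ∀ u, V u = ⨅ x ∈ {x | g x ∈ C + ({u} : Set (EuclideanSpace ℝ (Fin m)))}, f x)
    (cstar : ℝ) (hcstar : 0 < cstar)
    (hexact : (⨅ x ∈ {x | g x ∈ C}, f x) =
      ⨅ x, f x + ((cstar * Metric.infDist (g x) C : ℝ) : EReal)) :
    (∀ u, V 0 ≤ V u + ((cstar * ‖u‖ : ℝ) : EReal)) ∧
      (-(cstar : EReal)) ≤ Filter.liminf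
        (fun u => (V u - V 0) / ((‖u‖ : ℝ) : EReal))
        (nhdsWithin (0 : EuclideanSpace ℝ (Fin m)) {0}ᶜ) := by
  -- V 0 = fstar
  have hV0 : V 0 = (fstar : EReal) := by
    rw [hV 0, hfstar]
    congr 1
    ext x
    simp
  -- main inequality
  have hmain : ∀ u, V 0 ≤ V u + ((cstar * ‖u‖ : ℝ) : EReal) := by
    intro u
    have hsub : (fstar : EReal) - ((cstar * ‖u‖ : ℝ) : EReal) ≤ V u := by
      rw [hV u]
      refine le_iInf₂ fun x hx => ?_
      -- g x ∈ C + {u}, so dist (g x) C ≤ ‖u‖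
      have hy : g x + -u ∈ C := by simpa using hx
      have hdist : Metric.infDist (g x) C ≤ ‖u‖ := by
        calc Metric.infDist (g x) C ≤ dist (g x) (g x + -u) := Metric.infDist_le_dist_of_mem hy
        _ = ‖u‖ := by simp [dist_eq_norm]
      have h1 : (fstar : EReal) ≤ f x + ((cstar * Metric.infDist (g x) C : ℝ) : EReal) := by
        rw [hfstar, hexact]; exact iInf_le _ x
      have h2 : ((cstar * Metric.infDist (g x) C : ℝ) : EReal) ≤ ((cstar * ‖u‖ : ℝ) : EReal) := by
        exact_mod_cast mul_le_mul_of_nonneg_left (by simpa using hdist) hcstar.le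
      have h3 : (fstar : EReal) ≤ f x + ((cstar * ‖u‖ : ℝ) : EReal) :=
        h1.trans (add_le_add le_rfl h2)
      exact EReal.sub_le_of_le_add h3
    rw [hV0]
    exact (EReal.sub_le_iff_le_add (.inl (EReal.coe_ne_bot _)) (.inl (EReal.coe_ne_top _))).1 hsub
  refine ⟨hmain, ?_⟩
  refine Filter.le_liminf_of_le (by isBoundedDefault) ?_
  refine Filter.eventually_of_mem self_mem_nhdsWithin fun u hu => ?_
  have hu0 : u ≠ 0 := by simpa using hu
  have hnorm : (0 : ℝ) < ‖u‖ := norm_pos_iff.2 hu0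
  rw [EReal.le_div_iff_mul_le (by exact_mod_cast hnorm) (EReal.coe_ne_top _)]
  have hmul : (-(cstar : EReal)) * ((‖u‖ : ℝ) : EReal) = ((-(cstar * ‖u‖) : ℝ) : EReal) := by
    push_cast; exact neg_mul _ _
  rw [hmul]
  -- need -(cstar * ‖u‖) ≤ V u - V 0
  rw [hV0]
  refine (EReal.le_sub_iff_add_le (.inl (EReal.coe_ne_bot _)) (.inl (EReal.coe_ne_top _))).2 ?_
  have := hmain u
  rw [hV0] at this
  have h4 : (fstar : EReal) - ((cstar * ‖u‖ : ℝ) : EReal) ≤ V u := EReal.sub_le_of_le_add this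
  calc ((-(cstar * ‖u‖) : ℝ) : EReal) + (fstar : EReal)
      = (fstar : EReal) - ((cstar * ‖u‖ : ℝ) : EReal) := by
        rw [add_comm, sub_eq_add_neg, EReal.coe_neg]
    _ ≤ V u := h4
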